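/- Let K be a finite simplicial complex. There exists a function θ: K_q → {1,−1} with θ(τ̄) = θ(τ) for all τ ∈ K_q such that S^θ ∘ D_q^down ∘ S^θ = −D_q^down (where S^θ is the operator of multiplication by θ on ℓ²(K_q)) if and only if the down graph Y_q is bipartite. Consequently, if Y_q is bipartite, then the set of eigenvalues of D_q^down is symmetric about the origin. -/

import Mathlib

open scoped BigOperators

/-- The set of oriented `q`-simplices of a simplicial complex, together with the
orientation-reversal involution `bar` (writing `τ̄` for `bar τ`). -/
structure OrientedSet where
  K : Type
  bar : K → K
  bar_invol : ∀ τ, bar (bar τ) = τ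
  bar_ne : ∀ τ, bar τ ≠ τ

/-- The data of an up graph (`mult = 2(q+1)`) or a down graph (`mult = 2`) on the set of
oriented `q`-simplices: the sign function `η` (extended by `0` off the edge set, so that
`(τ₁, τ₂)` is an edge iff `eta τ₁ τ₂ ≠ 0`), the degree function (`deg_X`, resp. `deg_Y`),
and local finiteness; the degree of a vertex `τ` in the graph is `mult * deg τ`. -/
structure GroverStructure (O : OrientedSet) where
  eta : O.K → O.K → ℝ
  eta_symm : ∀ τ₁ τ₂, eta τ₁ τ₂ = eta τ₂ τ₁
  eta_vals : ∀ τ₁ τ₂, eta τ₁ τ₂ = 0 ∨ eta τ₁ τ₂ = 1 ∨ eta τ₁ τ₂ = -1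
  eta_bar_left : ∀ τ₁ τ₂, eta (O.bar τ₁) τ₂ = - eta τ₁ τ₂
  eta_self : ∀ τ, eta τ τ = 0
  eta_bar_self : ∀ τ, eta τ (O.bar τ) = 0
  deg : O.K → ℕ
  deg_pos : ∀ τ, 0 < deg τ
  deg_bar : ∀ τ, deg (O.bar τ) = deg τ
  mult : ℕ
  nbhdFinite : ∀ τ, {τ' | eta τ τ' ≠ 0}.Finite
  nbhd_card : ∀ τ, (nbhdFinite τ).toFinset.card = mult * deg τ

namespace GroverStructure

variable {O : OrientedSet} (Y : GroverStructure O)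

/-- `(τ₁, τ₂)` is an oriented edge of the up/down graph. -/
def Edge (τ₁ τ₂ : O.K) : Prop := Y.eta τ₁ τ₂ ≠ 0

/-- The normalization constant `(mult * deg τ)^(-1/2)`. -/
noncomputable def c (τ : O.K) : ℂ := ((Real.sqrt (Y.mult * Y.deg τ) : ℝ) : ℂ)⁻¹

/-- The operator `d : ℓ²(E) → ℓ²(K)`; elements of `ℓ²(E)` are represented as
functions on `K × K` (supported on the set of edges). -/
noncomputable def d (g : O.K × O.K → ℂ) : O.K → ℂ :=
  fun τ => Y.c τ * ∑ᶠ τ' ∈ {τ' | Y.eta τ τ' ≠ 0}, g (τ, τ')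

/-- The adjoint `d* : ℓ²(K) → ℓ²(E)`. -/
noncomputable def dstar (f : O.K → ℂ) : O.K × O.K → ℂ :=
  fun p => if Y.eta p.1 p.2 ≠ 0 then Y.c p.1 * f p.1 else 0

/-- The shift operator `(S g)(τ₁,τ₂) = η(τ₁,τ₂) • g(τ₂,τ₁)`. -/
noncomputable def shift (g : O.K × O.K → ℂ) : O.K × O.K → ℂ :=
  fun p => (Y.eta p.1 p.2 : ℂ) * g (p.2, p.1)

/-- The discriminant operator `D = d ∘ S ∘ d*`. -/
noncomputable def disc (f : O.K → ℂ) : O.K → ℂ := Y.d (Y.shift (Y.dstar f))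

/-- The Grover walk `U = S (2 d* d − I)`. -/
noncomputable def walk (g : O.K × O.K → ℂ) : O.K × O.K → ℂ :=
  Y.shift (fun p => 2 * Y.dstar (Y.d g) p - g p)

/-- Membership in `ℓ²(E)`: square summable and supported on the edge set. -/
def MemEdge (g : O.K × O.K → ℂ) : Prop :=
  Memℓp g 2 ∧ ∀ p : O.K × O.K, ¬ Y.Edge p.1 p.2 → g p = 0

end GroverStructure

/-- The orthogonal projection of `ℓ²(K_q)` onto the cochain space
`C^q(K,ℂ) = {f : f(τ̄) = -f(τ)}`. -/
noncomputable def projC (O : OrientedSet) (f : O.K → ℂ) : O.K → ℂ :=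
  fun τ => (f τ - f (O.bar τ)) / 2

/-- The down graph `Y_q` is bipartite: `K_q` splits as a disjoint union `A ∪ B` and every
edge joins a vertex of `A` to a vertex of `B`. -/
def GroverStructure.Bipartite {O : OrientedSet} (Y : GroverStructure O) : Prop :=
  ∃ A B : Set O.K, A ∪ B = Set.univ ∧ A ∩ B = ∅ ∧
    ∀ τ τ', Y.eta τ τ' ≠ 0 → ((τ ∈ A ∧ τ' ∈ B) ∨ (τ ∈ B ∧ τ' ∈ A))

open scoped Classical in
/-- Matrix form of the discriminant operator. -/
lemma GroverStructure.disc_apply {O : OrientedSet} [Fintype O.K]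
    (Y : GroverStructure O) (f : O.K → ℂ) (τ : O.K) :
    Y.disc f τ = Y.c τ * ∑ τ', (Y.eta τ τ' : ℂ) * (Y.c τ' * f τ') := by
  unfold GroverStructure.disc GroverStructure.d GroverStructure.shift GroverStructure.dstar
  congr 1
  rw [finsum_mem_eq_finite_toFinset_sum _ (Y.nbhdFinite τ)]
  rw [Finset.sum_subset ((Y.nbhdFinite τ).toFinset.subset_univ)
    (fun τ' _ h => by
      rw [Set.Finite.mem_toFinset, Set.mem_setOf_eq, not_not] at h
      simp [h])]
  apply Finset.sum_congr rfl
  intro τ' _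
  by_cases h : Y.eta τ τ' = 0
  · simp [h]
  · rw [if_pos (show Y.eta τ' τ ≠ 0 by rw [Y.eta_symm]; exact h)]

/-- For a finite complex there is a switching function
`θ : K_q → {±1}` with `θ(τ̄) = θ(τ)` and `S^θ D_q^down S^θ = −D_q^down` if and only if
the down graph `Y_q` is bipartite; consequently, if `Y_q` is bipartite then the set of
eigenvalues of `D_q^down` is symmetric about the origin. -/
theorem switching_iff_bipartite_and_spectral_symmetry
    (O : OrientedSet) [Finite O.K]
    (Y : GroverStructure O) (hYm : Y.mult = 2) :
    ((∃ θ : O.K → ℝ, (∀ τ, θ τ = 1 ∨ θ τ = -1) ∧ (∀ τ, θ (O.bar τ) = θ τ) ∧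
        ∀ g : O.K → ℂ,
          (fun τ => (θ τ : ℂ) * Y.disc (fun τ' => (θ τ' : ℂ) * g τ') τ)
            = fun τ => - Y.disc g τ) ↔ Y.Bipartite) ∧
    (Y.Bipartite →
      ∀ μ : ℂ, (∃ g : O.K → ℂ, g ≠ 0 ∧ Y.disc g = μ • g) ↔
        (∃ g : O.K → ℂ, g ≠ 0 ∧ Y.disc g = (-μ) • g)) := by
  classical
  haveI : Fintype O.K := Fintype.ofFinite _
  -- `c` never vanishes
  have hc : ∀ τ, Y.c τ ≠ 0 := by
    intro τ
    unfold GroverStructure.c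
    apply inv_ne_zero
    rw [Complex.ofReal_ne_zero]
    have hpos : 0 < Y.mult * Y.deg τ := by
      rw [hYm]; exact Nat.mul_pos two_pos (Y.deg_pos τ)
    have : (0:ℝ) < (Y.mult : ℝ) * (Y.deg τ : ℝ) := by exact_mod_cast hpos
    exact (Real.sqrt_pos.mpr this).ne'
  -- every vertex has a neighbor
  have hnb : ∀ τ, ∃ τ'', Y.eta τ τ'' ≠ 0 := by
    intro τ
    have hcard : 0 < (Y.nbhdFinite τ).toFinset.card := by
      rw [Y.nbhd_card, hYm]; exact Nat.mul_pos two_pos (Y.deg_pos τ)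
    obtain ⟨τ'', hτ''⟩ := Finset.card_pos.mp hcard
    rw [Set.Finite.mem_toFinset] at hτ''
    exact ⟨τ'', hτ''⟩
  have hiff : (∃ θ : O.K → ℝ, (∀ τ, θ τ = 1 ∨ θ τ = -1) ∧ (∀ τ, θ (O.bar τ) = θ τ) ∧
        ∀ g : O.K → ℂ,
          (fun τ => (θ τ : ℂ) * Y.disc (fun τ' => (θ τ' : ℂ) * g τ') τ)
            = fun τ => - Y.disc g τ) ↔ Y.Bipartite := by
    constructor
    · rintro ⟨θ, hv, hbar, hop⟩
      refine ⟨{τ | θ τ = 1}, {τ | θ τ = -1}, ?_, ?_, ?_⟩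
      · ext τ; simpa using hv τ
      · ext τ; simp only [Set.mem_inter_iff, Set.mem_setOf_eq, Set.mem_empty_iff_false,
          iff_false, not_and]
        intro h1 h2; rw [h1] at h2; norm_num at h2
      · intro τ τ' hη
        have key := congrFun (hop (fun σ => if σ = τ' then 1 else 0)) τ
        simp only [Y.disc_apply] at key
        have hterm : ∀ σ : O.K, (Y.eta τ σ : ℂ) * (Y.c σ * ((θ σ : ℂ) *
            (if σ = τ' then (1:ℂ) else 0)))
            = if σ = τ' then (Y.eta τ τ' : ℂ) * (Y.c τ' * (θ τ' : ℂ)) else 0 := by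
          intro σ; by_cases h : σ = τ' <;> simp [h]
        have hterm2 : ∀ σ : O.K, (Y.eta τ σ : ℂ) * (Y.c σ *
            (if σ = τ' then (1:ℂ) else 0))
            = if σ = τ' then (Y.eta τ τ' : ℂ) * (Y.c τ' * 1) else 0 := by
          intro σ; by_cases h : σ = τ' <;> simp [h]
        rw [Finset.sum_congr rfl (fun σ _ => hterm σ),
          Finset.sum_congr rfl (fun σ _ => hterm2 σ),
          Finset.sum_ite_eq' Finset.univ τ', Finset.sum_ite_eq' Finset.univ τ'] at key
        simp only [Finset.mem_univ, if_true, mul_one] at key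
        -- key : θτ * (cτ * (η * (cτ' * θτ'))) = -(cτ * (η * cτ'))
        have hX : Y.c τ * ((Y.eta τ τ' : ℂ) * Y.c τ') ≠ 0 := by
          apply mul_ne_zero (hc τ) (mul_ne_zero (by exact_mod_cast hη) (hc τ'))
        have hprod : (θ τ : ℂ) * (θ τ' : ℂ) = -1 := by
          have h1 : ((θ τ : ℂ) * (θ τ' : ℂ)) * (Y.c τ * ((Y.eta τ τ' : ℂ) * Y.c τ'))
              = (-1) * (Y.c τ * ((Y.eta τ τ' : ℂ) * Y.c τ')) := by
            rw [neg_one_mul, ← key]; ring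
          exact mul_right_cancel₀ hX h1
        rcases hv τ with h1 | h1 <;> rcases hv τ' with h2 | h2 <;>
          rw [h1, h2] at hprod <;> norm_num at hprod <;>
          simp [Set.mem_setOf_eq, h1, h2]
    · rintro ⟨A, B, hU, hI, hE⟩
      set θ : O.K → ℝ := fun τ => if τ ∈ A then 1 else -1 with hθdef
      have hv : ∀ τ, θ τ = 1 ∨ θ τ = -1 := by
        intro τ; by_cases h : τ ∈ A <;> simp [hθdef, h]
      have hkey : ∀ τ τ', Y.eta τ τ' ≠ 0 → θ τ * θ τ' = -1 := by
        intro τ τ' hη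
        have hdisj : ∀ σ, σ ∈ B → σ ∉ A := by
          intro σ hB hA
          have : σ ∈ A ∩ B := ⟨hA, hB⟩
          rw [hI] at this; exact this
        rcases hE τ τ' hη with ⟨hA1, hB2⟩ | ⟨hB1, hA2⟩
        · rw [hθdef]; simp [hA1, hdisj τ' hB2]
        · rw [hθdef]; simp [hA2, hdisj τ hB1]
      refine ⟨θ, hv, ?_, ?_⟩
      · intro τ
        obtain ⟨τ'', hτ''⟩ := hnb τ
        have hη' : Y.eta (O.bar τ) τ'' ≠ 0 := by
          rw [Y.eta_bar_left]; exact neg_ne_zero.mpr hτ''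
        have k1 := hkey τ τ'' hτ''
        have k2 := hkey (O.bar τ) τ'' hη'
        rcases hv τ'' with h | h <;> rw [h] at k1 k2 <;> linarith
      · intro g
        funext τ
        simp only [Y.disc_apply]
        have hsum : (θ τ : ℂ) * ∑ σ, (Y.eta τ σ : ℂ) * (Y.c σ * ((θ σ : ℂ) * g σ))
            = -∑ σ, (Y.eta τ σ : ℂ) * (Y.c σ * g σ) := by
          rw [Finset.mul_sum, ← Finset.sum_neg_distrib]
          apply Finset.sum_congr rfl
          intro σ _
          by_cases h : Y.eta τ σ = 0
          · simp [h]
          · have hp : (θ τ : ℂ) * (θ σ : ℂ) = -1 := by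
              exact_mod_cast congrArg (fun x : ℝ => (x : ℂ)) (hkey τ σ h)
            calc (θ τ : ℂ) * ((Y.eta τ σ : ℂ) * (Y.c σ * ((θ σ : ℂ) * g σ)))
                = ((θ τ : ℂ) * (θ σ : ℂ)) * ((Y.eta τ σ : ℂ) * (Y.c σ * g σ)) := by ring
              _ = -((Y.eta τ σ : ℂ) * (Y.c σ * g σ)) := by rw [hp]; ring
        calc (θ τ : ℂ) * (Y.c τ * ∑ σ, (Y.eta τ σ : ℂ) * (Y.c σ * ((θ σ : ℂ) * g σ)))
            = Y.c τ * ((θ τ : ℂ) * ∑ σ, (Y.eta τ σ : ℂ) * (Y.c σ * ((θ σ : ℂ) * g σ))) := by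
              ring
          _ = Y.c τ * (-∑ σ, (Y.eta τ σ : ℂ) * (Y.c σ * g σ)) := by rw [hsum]
          _ = -(Y.c τ * ∑ σ, (Y.eta τ σ : ℂ) * (Y.c σ * g σ)) := by ring
  refine ⟨hiff, fun hbip => ?_⟩
  obtain ⟨θ, hv, hbar, hop⟩ := hiff.mpr hbip
  have hθne : ∀ τ, (θ τ : ℂ) ≠ 0 := by
    intro τ; rcases hv τ with h | h <;> rw [h] <;> norm_num
  have hθ2 : ∀ τ, (θ τ : ℂ) * (θ τ : ℂ) = 1 := by
    intro τ; rcases hv τ with h | h <;> rw [h] <;> norm_num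
  have key : ∀ μ : ℂ, (∃ g : O.K → ℂ, g ≠ 0 ∧ Y.disc g = μ • g) →
      (∃ g : O.K → ℂ, g ≠ 0 ∧ Y.disc g = (-μ) • g) := by
    rintro μ ⟨g, hg0, hg⟩
    refine ⟨fun σ => (θ σ : ℂ) * g σ, ?_, ?_⟩
    · intro h
      apply hg0
      funext σ
      have := congrFun h σ
      simp only [Pi.zero_apply] at this ⊢
      exact (mul_eq_zero.mp this).resolve_left (hθne σ)
    · funext τ
      have h1 := congrFun (hop g) τ
      have h2 : Y.disc (fun τ' => (θ τ' : ℂ) * g τ') τ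
          = (θ τ : ℂ) * (-(Y.disc g τ)) := by
        calc Y.disc (fun τ' => (θ τ' : ℂ) * g τ') τ
            = ((θ τ : ℂ) * (θ τ : ℂ)) * Y.disc (fun τ' => (θ τ' : ℂ) * g τ') τ := by
              rw [hθ2]; ring
          _ = (θ τ : ℂ) * ((θ τ : ℂ) * Y.disc (fun τ' => (θ τ' : ℂ) * g τ') τ) := by ring
          _ = (θ τ : ℂ) * (-(Y.disc g τ)) := by rw [h1]
      rw [h2, hg]
      simp only [Pi.smul_apply, smul_eq_mul]
      ring
  intro μ
  refine ⟨key μ, fun h => ?_⟩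
  have := key (-μ) h
  simpa using this
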